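/- Let ψ : V → {1,2,3} be any map, let n_i = |ψ⁻¹(i)| for i ∈ {1,2,3}, and let t be a real number. Let S be the real matrix with rows indexed by V ⊔ {1,2,3} ⊔ {ε} and columns indexed by V, whose entries are S(u, v) = 1 if u = v and 0 otherwise (u, v ∈ V), S(i, v) = t³ if ψ(v) = i and 0 otherwise (i ∈ {1,2,3}), and S(ε, v) = 0. Then SᵀS is invertible, and I − S(SᵀS)⁻¹Sᵀ equals the matrix P (rows and columns indexed by V ⊔ {1,2,3} ⊔ {ε}) given by: P(u, v) = u_{ψ(u)} t⁶ if ψ(u) = ψ(v) and 0 otherwise (u, v ∈ V); P(v, i) = P(i, v) = −u_i t³ if ψ(v) = i and 0 otherwise (v ∈ V, i ∈ {1,2,3}); P(i, j) = u_i if i = j and 0 otherwise (i, j ∈ {1,2,3}); P(ε, ε) = 1; and all remaining entries in the row and column indexed by ε are 0; here u_i = 1/(1 + n_i t⁶). -/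

import Mathlib

open Matrix

/-- For any map `ψ : V → {1,2,3}` and any real `t`, with `S` the matrix whose columns are
`e_v + t³ e_{ψ(v)}` (rows indexed by `V ⊕ {1,2,3} ⊕ {ε}`), the matrix `SᵀS` is invertible
and `I - S (SᵀS)⁻¹ Sᵀ` equals the explicit matrix `P` with entries
`P(u,v) = u_{ψ(u)} t⁶` when `ψ(u) = ψ(v)` (else 0), `P(v,i) = P(i,v) = -u_i t³` when
`ψ(v) = i` (else 0), `P(i,j) = u_i` when `i = j` (else 0), `P(ε,ε) = 1`, and the remaining
entries in the row and column of `ε` equal 0, where `u_i = 1/(1 + n_i t⁶)` and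
`n_i = |ψ⁻¹(i)|`. -/
theorem projection_formula
    {V : Type*} [Fintype V] [DecidableEq V] [Nonempty V]
    (ψ : V → Fin 3) (t : ℝ)
    (nc : Fin 3 → ℕ) (hnc : ∀ i, nc i = (Finset.univ.filter fun v : V => ψ v = i).card)
    (u : Fin 3 → ℝ) (hu : ∀ i, u i = 1 / (1 + nc i * t ^ 6))
    (S : Matrix (V ⊕ Fin 3 ⊕ Unit) V ℝ)
    (hS : S = Matrix.of fun r (v : V) =>
      match r with
      | Sum.inl w => if w = v then (1 : ℝ) else 0
      | Sum.inr (Sum.inl i) => if ψ v = i then t ^ 3 else 0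
      | Sum.inr (Sum.inr _) => 0)
    (P : Matrix (V ⊕ Fin 3 ⊕ Unit) (V ⊕ Fin 3 ⊕ Unit) ℝ)
    (hP : P = Matrix.of fun r c =>
      match r, c with
      | Sum.inl w, Sum.inl v => if ψ w = ψ v then u (ψ w) * t ^ 6 else 0
      | Sum.inl v, Sum.inr (Sum.inl i) => if ψ v = i then -(u i * t ^ 3) else 0
      | Sum.inr (Sum.inl i), Sum.inl v => if ψ v = i then -(u i * t ^ 3) else 0
      | Sum.inr (Sum.inl i), Sum.inr (Sum.inl j) => if i = j then u i else 0
      | Sum.inr (Sum.inr _), Sum.inr (Sum.inr _) => (1 : ℝ)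
      | _, _ => 0) :
    IsUnit (Sᵀ * S) ∧ 1 - S * (Sᵀ * S)⁻¹ * Sᵀ = P := by
  -- basic facts about u
  have h1 : ∀ i, u i * (1 + (nc i : ℝ) * t ^ 6) = 1 := by
    intro i
    have hpos : (0:ℝ) < 1 + (nc i : ℝ) * t ^ 6 := by positivity
    rw [hu]; field_simp
  have h2 : ∀ i, 1 - (nc i : ℝ) * u i * t ^ 6 = u i := by
    intro i; linear_combination (-1 : ℝ) * h1 i
  -- counting sums
  have hsum : ∀ (i : Fin 3) (c : ℝ), (∑ x : V, if ψ x = i then c else 0) = (nc i : ℝ) * c := by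
    intro i c
    rw [Finset.sum_ite, Finset.sum_const, Finset.sum_const_zero, add_zero, nsmul_eq_mul, hnc]
  -- the candidate inverse of Sᵀ * S
  set N : Matrix V V ℝ := Matrix.of fun v w =>
    (if v = w then (1:ℝ) else 0) - (if ψ v = ψ w then u (ψ v) * t ^ 6 else 0) with hN
  have hM : Sᵀ * S = Matrix.of fun v w =>
      (if v = w then (1:ℝ) else 0) + (if ψ v = ψ w then t ^ 6 else 0) := by
    rw [hS]
    ext v w
    simp only [Matrix.mul_apply, Matrix.transpose_apply, Matrix.of_apply,
      Fintype.sum_sum_type]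
    have e1 : (∑ x : V,
        (if x = v then (1:ℝ) else 0) * (if x = w then (1:ℝ) else 0)) =
        (if v = w then (1:ℝ) else 0) := by
      rw [Finset.sum_eq_single v]
      · simp
      · intro x _ hx; simp [hx]
      · simp
    have e2 : (∑ i : Fin 3,
        (if ψ v = i then t ^ 3 else 0) * (if ψ w = i then t ^ 3 else 0)) =
        (if ψ v = ψ w then t ^ 6 else 0) := by
      rw [Finset.sum_eq_single (ψ v)]
      · by_cases h : ψ v = ψ w
        · rw [if_pos rfl, if_pos h.symm, if_pos h]; ring
        · rw [if_neg (fun hh : ψ w = ψ v => h hh.symm), mul_zero, if_neg h]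
      · intro j _ hj; simp [Ne.symm hj]
      · simp
    rw [e1, e2]
    simp
  have key : ∀ (i : Fin 3) (w : V),
      (∑ x : V, (if ψ x = i then (1:ℝ) else 0) * (if ψ x = ψ w then u (ψ x) * t ^ 6 else 0)) =
      (if ψ w = i then (nc i : ℝ) * (u i * t ^ 6) else 0) := by
    intro i w
    by_cases hw : ψ w = i
    · rw [if_pos hw, ← hsum i (u i * t ^ 6)]
      apply Finset.sum_congr rfl
      intro x _
      by_cases hx : ψ x = i <;> simp [hx, hw]
    · rw [if_neg hw]
      apply Finset.sum_eq_zero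
      intro x _
      by_cases hx : ψ x = i
      · have : ¬ ψ x = ψ w := by rw [hx]; exact fun h => hw h.symm
        simp [this]
      · simp [hx]
  have hMN : (Sᵀ * S) * N = 1 := by
    rw [hM]
    ext v w
    simp only [Matrix.mul_apply, Matrix.of_apply, hN, Matrix.one_apply]
    have expand : ∀ x : V,
        ((if v = x then (1:ℝ) else 0) + (if ψ v = ψ x then t ^ 6 else 0)) *
          ((if x = w then (1:ℝ) else 0) - (if ψ x = ψ w then u (ψ x) * t ^ 6 else 0)) =
        (if v = x then (1:ℝ) else 0) * (if x = w then (1:ℝ) else 0)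
        - (if v = x then (1:ℝ) else 0) * (if ψ x = ψ w then u (ψ x) * t ^ 6 else 0)
        + t ^ 6 * ((if ψ x = ψ v then (1:ℝ) else 0) * (if x = w then (1:ℝ) else 0))
        - t ^ 6 * ((if ψ x = ψ v then (1:ℝ) else 0) * (if ψ x = ψ w then u (ψ x) * t ^ 6 else 0)) := by
      intro x
      by_cases h : ψ v = ψ x
      · rw [if_pos h, if_pos h.symm]; ring
      · rw [if_neg h, if_neg (fun hh : ψ x = ψ v => h hh.symm)]; ring
    rw [Finset.sum_congr rfl (fun x _ => expand x)]
    simp only [Finset.sum_sub_distrib, Finset.sum_add_distrib, ← Finset.mul_sum]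
    rw [key (ψ v) w]
    have e1 : (∑ x : V, (if v = x then (1:ℝ) else 0) * (if x = w then (1:ℝ) else 0)) =
        (if v = w then (1:ℝ) else 0) := by
      rw [Finset.sum_eq_single v]
      · simp
      · intro x _ hx; simp [Ne.symm hx]
      · simp
    have e2 : (∑ x : V, (if v = x then (1:ℝ) else 0) * (if ψ x = ψ w then u (ψ x) * t ^ 6 else 0)) =
        (if ψ v = ψ w then u (ψ v) * t ^ 6 else 0) := by
      rw [Finset.sum_eq_single v]
      · simp
      · intro x _ hx; simp [Ne.symm hx]
      · simp
    have e3 : (∑ x : V, (if ψ x = ψ v then (1:ℝ) else 0) * (if x = w then (1:ℝ) else 0)) =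
        (if ψ w = ψ v then (1:ℝ) else 0) := by
      rw [Finset.sum_eq_single w]
      · simp
      · intro x _ hx; simp [hx]
      · simp
    rw [e1, e2, e3]
    by_cases h : ψ v = ψ w
    · rw [if_pos h, if_pos h.symm, if_pos h.symm]
      by_cases hvw : v = w
      · rw [if_pos hvw]
        linear_combination t ^ 6 * h2 (ψ v)
      · rw [if_neg hvw]
        linear_combination t ^ 6 * h2 (ψ v)
    · have h' : ¬ ψ w = ψ v := fun hh => h hh.symm
      rw [if_neg h, if_neg h', if_neg h']
      have hvw : v ≠ w := fun hh => h (congrArg ψ hh)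
      rw [if_neg hvw]
      ring
  have hinv : (Sᵀ * S)⁻¹ = N := Matrix.inv_eq_right_inv hMN
  have hdet : IsUnit (Sᵀ * S) := by
    have := Matrix.det_mul (Sᵀ * S) N
    rw [hMN, Matrix.det_one] at this
    exact (Matrix.isUnit_iff_isUnit_det _).mpr (IsUnit.of_mul_eq_one _ this.symm)
  refine ⟨hdet, ?_⟩
  rw [hinv]
  -- compute S * N
  have hSN : S * N = Matrix.of fun r (w : V) =>
      match r with
      | Sum.inl a => (if a = w then (1:ℝ) else 0) - (if ψ a = ψ w then u (ψ a) * t ^ 6 else 0)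
      | Sum.inr (Sum.inl i) => if ψ w = i then u i * t ^ 3 else 0
      | Sum.inr (Sum.inr _) => 0 := by
    rw [hS]
    ext r w
    cases r with
    | inl a =>
      simp only [Matrix.mul_apply, Matrix.of_apply, hN]
      rw [Finset.sum_eq_single a]
      · simp
      · intro x _ hx; simp [Ne.symm hx]
      · simp
    | inr r =>
      cases r with
      | inl i =>
        simp only [Matrix.mul_apply, Matrix.of_apply, hN]
        have expand : ∀ x : V,
            (if ψ x = i then t ^ 3 else 0) *
              ((if x = w then (1:ℝ) else 0) - (if ψ x = ψ w then u (ψ x) * t ^ 6 else 0)) =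
            t ^ 3 * ((if ψ x = i then (1:ℝ) else 0) * (if x = w then (1:ℝ) else 0))
            - t ^ 3 * ((if ψ x = i then (1:ℝ) else 0) * (if ψ x = ψ w then u (ψ x) * t ^ 6 else 0)) := by
          intro x
          split_ifs <;> ring
        rw [Finset.sum_congr rfl (fun x _ => expand x)]
        simp only [Finset.sum_sub_distrib, ← Finset.mul_sum]
        rw [key i w]
        have e3 : (∑ x : V, (if ψ x = i then (1:ℝ) else 0) * (if x = w then (1:ℝ) else 0)) =
            (if ψ w = i then (1:ℝ) else 0) := by
          rw [Finset.sum_eq_single w]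
          · simp
          · intro x _ hx; simp [hx]
          · simp
        rw [e3]
        by_cases hw : ψ w = i
        · simp only [if_pos hw]
          linear_combination t ^ 3 * h2 i
        · simp only [if_neg hw]
          ring
      | inr e =>
        simp only [Matrix.mul_apply, Matrix.of_apply]
        simp
  rw [hSN, hS, hP]
  ext r c
  cases r with
  | inl a =>
    cases c with
    | inl b =>
      simp only [Matrix.sub_apply, Matrix.mul_apply, Matrix.of_apply,
        Matrix.transpose_apply, Matrix.one_apply, Sum.inl.injEq]
      rw [Finset.sum_eq_single b]
      · by_cases hab : a = b
        · subst hab; simp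
        · by_cases hpsi : ψ a = ψ b <;> simp [hab, hpsi]
      · intro x _ hx; simp [Ne.symm hx]
      · simp
    | inr c =>
      cases c with
      | inl j =>
        have hone : (1 : Matrix (V ⊕ Fin 3 ⊕ Unit) (V ⊕ Fin 3 ⊕ Unit) ℝ)
            (Sum.inl a) (Sum.inr (Sum.inl j)) = 0 := Matrix.one_apply_ne (by simp)
        simp only [Matrix.sub_apply, hone, Matrix.mul_apply, Matrix.of_apply,
          Matrix.transpose_apply]
        have expand : ∀ w : V,
            ((if a = w then (1:ℝ) else 0) - (if ψ a = ψ w then u (ψ a) * t ^ 6 else 0)) *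
              (if ψ w = j then t ^ 3 else 0) =
            t ^ 3 * ((if ψ w = j then (1:ℝ) else 0) * (if a = w then (1:ℝ) else 0))
            - t ^ 3 * t ^ 6 * u (ψ a) *
              ((if ψ w = j then (1:ℝ) else 0) * (if ψ w = ψ a then (1:ℝ) else 0)) := by
          intro w
          by_cases ha : ψ a = ψ w
          · simp only [if_pos ha, if_pos ha.symm]; split_ifs <;> ring
          · simp only [if_neg ha, if_neg (fun hh : ψ w = ψ a => ha hh.symm)]
            split_ifs <;> ring
        rw [Finset.sum_congr rfl (fun w _ => expand w)]
        simp only [Finset.sum_sub_distrib, ← Finset.mul_sum]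
        have e1 : (∑ w : V, (if ψ w = j then (1:ℝ) else 0) * (if a = w then (1:ℝ) else 0)) =
            (if ψ a = j then (1:ℝ) else 0) := by
          rw [Finset.sum_eq_single a]
          · simp
          · intro x _ hx; simp [Ne.symm hx]
          · simp
        have e2 : (∑ w : V, (if ψ w = j then (1:ℝ) else 0) * (if ψ w = ψ a then (1:ℝ) else 0)) =
            (if ψ a = j then ((nc j : ℝ) * 1) else 0) := by
          by_cases ha : ψ a = j
          · rw [if_pos ha, ← hsum j 1]
            apply Finset.sum_congr rfl
            intro x _
            by_cases hx : ψ x = j <;> simp [hx, ha]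
          · rw [if_neg ha]
            apply Finset.sum_eq_zero
            intro x _
            by_cases hx : ψ x = j
            · have hne : ¬ ψ x = ψ a := by rw [hx]; exact fun h => ha h.symm
              simp [hne]
            · simp [hx]
        rw [e1, e2]
        by_cases ha : ψ a = j
        · simp only [if_pos ha, ha, if_true]
          linear_combination (-(t ^ 3)) * h2 j
        · simp only [if_neg ha]; ring
      | inr e =>
        have hone : (1 : Matrix (V ⊕ Fin 3 ⊕ Unit) (V ⊕ Fin 3 ⊕ Unit) ℝ)
            (Sum.inl a) (Sum.inr (Sum.inr e)) = 0 := Matrix.one_apply_ne (by simp)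
        simp only [Matrix.sub_apply, hone, Matrix.mul_apply, Matrix.of_apply,
          Matrix.transpose_apply]
        simp
  | inr r =>
    cases r with
    | inl i =>
      cases c with
      | inl b =>
        have hone : (1 : Matrix (V ⊕ Fin 3 ⊕ Unit) (V ⊕ Fin 3 ⊕ Unit) ℝ)
            (Sum.inr (Sum.inl i)) (Sum.inl b) = 0 := Matrix.one_apply_ne (by simp)
        simp only [Matrix.sub_apply, hone, Matrix.mul_apply, Matrix.of_apply,
          Matrix.transpose_apply]
        rw [Finset.sum_eq_single b]
        · by_cases hb : ψ b = i <;> simp [hb]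
        · intro x _ hx; simp [Ne.symm hx]
        · simp
      | inr c =>
        cases c with
        | inl j =>
          have hone : (1 : Matrix (V ⊕ Fin 3 ⊕ Unit) (V ⊕ Fin 3 ⊕ Unit) ℝ)
              (Sum.inr (Sum.inl i)) (Sum.inr (Sum.inl j)) = (if i = j then (1:ℝ) else 0) := by
            rw [Matrix.one_apply]
            by_cases hij : i = j
            · rw [if_pos hij, if_pos (by rw [hij])]
            · rw [if_neg hij, if_neg (by simp [hij])]
          simp only [Matrix.sub_apply, hone, Matrix.mul_apply, Matrix.of_apply,
            Matrix.transpose_apply]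
          have expand : ∀ w : V,
              (if ψ w = i then u i * t ^ 3 else 0) * (if ψ w = j then t ^ 3 else 0) =
              (u i * t ^ 3 * t ^ 3) * ((if ψ w = i then (1:ℝ) else 0) * (if ψ w = j then (1:ℝ) else 0)) := by
            intro w
            split_ifs <;> ring
          rw [Finset.sum_congr rfl (fun w _ => expand w)]
          simp only [← Finset.mul_sum]
          have e : (∑ w : V, (if ψ w = i then (1:ℝ) else 0) * (if ψ w = j then (1:ℝ) else 0)) =
              (if i = j then ((nc i : ℝ) * 1) else 0) := by
            by_cases hij : i = j
            · subst hij
              rw [if_pos rfl, ← hsum i 1]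
              apply Finset.sum_congr rfl
              intro x _
              by_cases hx : ψ x = i <;> simp [hx]
            · rw [if_neg hij]
              apply Finset.sum_eq_zero
              intro x _
              by_cases hx : ψ x = i
              · have hne : ¬ ψ x = j := by rw [hx]; exact hij
                simp [hne]
              · simp [hx]
          rw [e]
          by_cases hij : i = j
          · simp only [if_pos hij, hij, if_true]
            linear_combination h2 j
          · simp only [if_neg hij]; ring
        | inr e =>
          have hone : (1 : Matrix (V ⊕ Fin 3 ⊕ Unit) (V ⊕ Fin 3 ⊕ Unit) ℝ)
              (Sum.inr (Sum.inl i)) (Sum.inr (Sum.inr e)) = 0 := Matrix.one_apply_ne (by simp)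
          simp only [Matrix.sub_apply, hone, Matrix.mul_apply, Matrix.of_apply,
            Matrix.transpose_apply]
          simp
    | inr e =>
      cases c with
      | inl b =>
        have hone : (1 : Matrix (V ⊕ Fin 3 ⊕ Unit) (V ⊕ Fin 3 ⊕ Unit) ℝ)
            (Sum.inr (Sum.inr e)) (Sum.inl b) = 0 := Matrix.one_apply_ne (by simp)
        simp only [Matrix.sub_apply, hone, Matrix.mul_apply, Matrix.of_apply,
          Matrix.transpose_apply]
        simp
      | inr c =>
        cases c with
        | inl j =>
          have hone : (1 : Matrix (V ⊕ Fin 3 ⊕ Unit) (V ⊕ Fin 3 ⊕ Unit) ℝ)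
              (Sum.inr (Sum.inr e)) (Sum.inr (Sum.inl j)) = 0 := Matrix.one_apply_ne (by simp)
          simp only [Matrix.sub_apply, hone, Matrix.mul_apply, Matrix.of_apply,
            Matrix.transpose_apply]
          simp
        | inr e2 =>
          have hone : (1 : Matrix (V ⊕ Fin 3 ⊕ Unit) (V ⊕ Fin 3 ⊕ Unit) ℝ)
              (Sum.inr (Sum.inr e)) (Sum.inr (Sum.inr e2)) = 1 := by
            rw [Matrix.one_apply]; simp
          simp only [Matrix.sub_apply, hone, Matrix.mul_apply, Matrix.of_apply,
            Matrix.transpose_apply]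
          simp
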